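/- Let V and W be dense subsets of the Euclidean plane and let δ > 0. Then every step-isometry at level (δ, δ) from V to W is an isometry; that is, if f : V → W is surjective and ⌊d(u,v)/δ⌋ = ⌊d(f(u), f(v))/δ⌋ for all u, v ∈ V, then d(f(u), f(v)) = d(u,v) for all u, v ∈ V. -/

import Mathlib

open MeasureTheory Metric

/-- Pairs of distinct points of `V` at distance less than `δ`: potential edges. -/
def LargEdges {S : Type*} [MetricSpace S] (V : Set S) (δ : ℝ) : Set (Sym2 V) :=
  {e | ¬ e.IsDiag ∧ ∀ u v : V, e = s(u, v) → dist (u : S) (v : S) < δ}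

/-- The graph on `V` determined by a sample `ω` of the LARG model. -/
def largGraph {S : Type*} [MetricSpace S] (V : Set S) (δ : ℝ)
    (ω : LargEdges V δ → Bool) : SimpleGraph V where
  Adj u v := ∃ h : s(u, v) ∈ LargEdges V δ, ω ⟨s(u, v), h⟩ = true
  symm := by
    constructor
    intro u v h
    rwa [Sym2.eq_swap]
  loopless := by
    constructor
    rintro u ⟨h, -⟩
    exact h.1 (by simp)

/-- `G` is geometrically existentially closed at level `δ`. -/
def IsGEC {S : Type*} [MetricSpace S] {V : Set S} (G : SimpleGraph V) (δ : ℝ) : Prop :=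
  ∀ δ' : ℝ, 0 < δ' → δ' < δ → ∀ x : V, ∀ A B : Finset V,
    Disjoint A B → x ∉ A → x ∉ B →
    (∀ u : V, u ∈ A ∨ u ∈ B → dist (u : S) (x : S) < δ) →
    ∃ z : V, z ∉ A ∧ z ∉ B ∧ z ≠ x ∧
      (∀ a ∈ A, G.Adj z a) ∧ (∀ b ∈ B, ¬ G.Adj z b) ∧
      (∀ u : V, u ∈ A ∨ u ∈ B → dist (u : S) (z : S) < δ) ∧ dist (x : S) (z : S) < δ'

/-- `G` has threshold `δ`: adjacent vertices are at distance less than `δ`. -/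
def HasThreshold {S : Type*} [MetricSpace S] {V : Set S} (G : SimpleGraph V) (δ : ℝ) : Prop :=
  ∀ u v : V, G.Adj u v → dist (u : S) (v : S) < δ

/-- A geometric `δ`-graph: `δ`-g.e.c. with threshold `δ`. -/
def IsGeometricGraph {S : Type*} [MetricSpace S] {V : Set S} (G : SimpleGraph V) (δ : ℝ) : Prop :=
  IsGEC G δ ∧ HasThreshold G δ

/-- A set is dense in itself. -/
def DenseInItself {S : Type*} [MetricSpace S] (V : Set S) : Prop :=
  ∀ x ∈ V, ∀ ε : ℝ, 0 < ε → ∃ y ∈ V, y ≠ x ∧ dist y x < ε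

/-- A graph is existentially closed. -/
def IsEC {α : Type*} (G : SimpleGraph α) : Prop :=
  ∀ A B : Finset α, Disjoint A B →
    ∃ z : α, z ∉ A ∧ z ∉ B ∧ (∀ a ∈ A, G.Adj z a) ∧ (∀ b ∈ B, ¬ G.Adj z b)

/-- A metrically convex set. -/
def MetricConvex {S : Type*} [MetricSpace S] (C : Set S) : Prop :=
  ∀ x ∈ C, ∀ y ∈ C, ∃ z ∈ C, dist x z + dist z y = dist x y

/-- `f : V → W` is a step-isometry at level `(δ, γ)`. -/
def IsStepIsometry {S T : Type*} [MetricSpace S] [MetricSpace T]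
    {V : Set S} {W : Set T} (f : V → W) (δ γ : ℝ) : Prop :=
  Function.Surjective f ∧
    ∀ u v : V, ⌊dist (u : S) (v : S) / δ⌋ = ⌊dist ((f u : T)) ((f v : T)) / γ⌋

/-- Quotient of `v` w.r.t. offset `δ` and anchor `v₀`. -/
noncomputable def quot' (δ v₀ v : ℝ) : ℤ := ⌊(v - v₀) / δ⌋

/-- Representative of `v` w.r.t. offset `δ` and anchor `v₀`. -/
noncomputable def repr' (δ v₀ v : ℝ) : ℝ := v - v₀ - δ * ⌊(v - v₀) / δ⌋


section StepIsometryAux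

open Filter

noncomputable section
set_option maxHeartbeats 1600000

local notation "E2" => EuclideanSpace ℝ (Fin 2)




noncomputable def tau (δ : ℝ) (b k : ℕ) : ℝ := Real.sqrt (4 * (b:ℝ)^2 - (k:ℝ)^2) * δ

lemma tau_nonneg (hδ : 0 ≤ δ) (b k : ℕ) : 0 ≤ tau δ b k :=
  mul_nonneg (Real.sqrt_nonneg _) hδ

lemma apollonius (x y z : E2) :
    dist z (x + (2⁻¹:ℝ) • (y - x)) ^ 2
      = (dist z x ^ 2 + dist z y ^ 2) / 2 - dist x y ^ 2 / 4 := by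
  have key : z - (x + (2⁻¹:ℝ) • (y - x)) = (2⁻¹:ℝ) • ((z - x) + (z - y)) := by
    module
  have hpar := parallelogram_law_with_norm ℝ (z - x) (z - y)
  have h2 : (z - x) - (z - y) = y - x := by abel
  rw [h2] at hpar
  rw [dist_eq_norm, key, norm_smul, dist_eq_norm z x, dist_eq_norm z y, dist_eq_norm x y,
    ← norm_neg (x - y)]
  have h3 : -(x-y) = y - x := by abel
  rw [h3]
  have h4 : ‖(2⁻¹:ℝ)‖ = 2⁻¹ := by simp [Real.norm_eq_abs]
  rw [h4]
  nlinarith [hpar]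

lemma exists_unit_perp (w : E2) : ∃ n : E2, ‖n‖ = 1 ∧ (inner ℝ w n : ℝ) = 0 := by
  by_cases hw : w = 0
  · refine ⟨EuclideanSpace.single 0 1, ?_, ?_⟩
    · simp [EuclideanSpace.norm_single]
    · simp [hw]
  · have hc : 0 < ‖w‖ := norm_pos_iff.mpr hw
    set n0 : E2 := WithLp.toLp 2 (fun i => if i = 0 then -(w 1) else w 0 : Fin 2 → ℝ) with hn0
    have happ0 : n0 0 = -(w 1) := rfl
    have happ1 : n0 1 = w 0 := rfl
    have hnorm : ‖n0‖ = ‖w‖ := by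
      rw [EuclideanSpace.norm_eq, EuclideanSpace.norm_eq]
      rw [Fin.sum_univ_two, Fin.sum_univ_two, happ0, happ1]
      simp only [Real.norm_eq_abs, sq_abs]
      ring_nf
    have hinner : (inner ℝ w n0 : ℝ) = 0 := by
      rw [PiLp.inner_apply, Fin.sum_univ_two, happ0, happ1]
      simp only [RCLike.inner_apply, starRingEnd_apply, star_trivial]
      ring
    refine ⟨‖w‖⁻¹ • n0, ?_, ?_⟩
    · rw [norm_smul, hnorm, Real.norm_eq_abs, abs_inv, abs_of_pos hc, inv_mul_cancel₀ (ne_of_gt hc)]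
    · rw [real_inner_smul_right, hinner, mul_zero]




def LensSmall (X : Set E2) (δ : ℝ) (b k : ℕ) (x y : E2) : Prop :=
  ∀ z ∈ X, ∀ z' ∈ X, dist z x < b*δ → dist z y < b*δ → dist z' x < b*δ → dist z' y < b*δ →
    dist z z' < k*δ

lemma lensSmall_of_far {X : Set E2} {δ : ℝ} (hδ : 0 < δ) {b k : ℕ} (hk : (k:ℝ) ≤ 2*b)
    {x y : E2} (hd : tau δ b k ≤ dist x y) : LensSmall X δ b k x y := by
  intro z hz z' hz' h1 h2 h3 h4
  have h0 : 0 ≤ 4*(b:ℝ)^2 - (k:ℝ)^2 := by nlinarith [Nat.cast_nonneg (α := ℝ) k]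
  have hτ2 : (4*(b:ℝ)^2 - (k:ℝ)^2) * δ^2 ≤ dist x y ^2 := by
    have he : (4*(b:ℝ)^2 - (k:ℝ)^2) * δ^2 = (tau δ b k)^2 := by
      rw [tau, mul_pow, Real.sq_sqrt h0]
    rw [he]
    have := tau_nonneg hδ.le b k
    nlinarith
  have hMest : ∀ w : E2, dist w x < b*δ → dist w y < b*δ →
      dist w (x + (2⁻¹:ℝ) • (y - x)) < k*δ/2 := by
    intro w hwx hwy
    have h5 := apollonius x y w
    have e1 : dist w x ^ 2 < ((b:ℝ)*δ)^2 := by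
      nlinarith [dist_nonneg (x := w) (y := x)]
    have e2 : dist w y ^ 2 < ((b:ℝ)*δ)^2 := by
      nlinarith [dist_nonneg (x := w) (y := y)]
    have hub : dist w (x + (2⁻¹:ℝ) • (y - x)) ^ 2 < (k*δ/2)^2 := by nlinarith
    exact lt_of_pow_lt_pow_left₀ 2 (by positivity) hub
  calc dist z z' ≤ dist z (x + (2⁻¹:ℝ) • (y - x)) + dist z' (x + (2⁻¹:ℝ) • (y - x)) :=
        dist_triangle_right _ _ _
  _ < k*δ/2 + k*δ/2 := add_lt_add (hMest z h1 h2) (hMest z' h3 h4)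
  _ = k*δ := by ring

lemma not_lensSmall_of_near {X : Set E2} {δ : ℝ} (hδ : 0 < δ) (hX : Dense X) {b k : ℕ}
    {x y : E2} (hd : dist x y < tau δ b k) : ¬ LensSmall X δ b k x y := by
  intro hL
  set d := dist x y with hdd
  have hd0 : 0 ≤ d := dist_nonneg
  have h0 : 0 ≤ 4*(b:ℝ)^2 - (k:ℝ)^2 := by
    by_contra h
    push_neg at h
    have : tau δ b k = 0 := by
      rw [tau, Real.sqrt_eq_zero_of_nonpos h.le, zero_mul]
    rw [this] at hd; linarith
  have hτ2 : d^2 < (4*(b:ℝ)^2 - (k:ℝ)^2) * δ^2 := by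
    have he : (4*(b:ℝ)^2 - (k:ℝ)^2) * δ^2 = (tau δ b k)^2 := by
      rw [tau, mul_pow, Real.sq_sqrt h0]
    rw [he]
    nlinarith [tau_nonneg hδ.le b k]
  set H : ℝ := ((k:ℝ)^2*δ^2/4 + ((b:ℝ)^2*δ^2 - d^2/4))/2 with hH
  have hH1 : ((k:ℝ)*δ/2)^2 < H := by rw [hH]; nlinarith
  have hH2 : H < ((b:ℝ)*δ)^2 - d^2/4 := by rw [hH]; nlinarith
  have hHpos : 0 ≤ H := le_trans (by positivity) hH1.le
  set h' := Real.sqrt H with hh'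
  have hh'2 : h'^2 = H := Real.sq_sqrt hHpos
  have hh'gt : (k:ℝ)*δ/2 < h' := by
    rw [hh']
    exact (Real.lt_sqrt (by positivity)).mpr hH1
  have hh'pos : 0 < h' := lt_of_le_of_lt (by positivity) hh'gt
  obtain ⟨n, hn1, hn2⟩ := exists_unit_perp (y - x)
  have hyx : ‖y - x‖ = d := by rw [hdd, dist_eq_norm, norm_sub_rev]
  have hnorm2 : ∀ (a c : ℝ), ‖a • (y-x) + c • n‖^2 = a^2 * d^2 + c^2 := by
    intro a c
    rw [norm_add_sq_real, real_inner_smul_left, real_inner_smul_right, hn2, norm_smul, norm_smul,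
      hn1, hyx]
    simp [Real.norm_eq_abs, mul_pow, sq_abs]
  set M := x + (2⁻¹:ℝ) • (y - x) with hM
  set P := M + h' • n with hP
  set Q := M - h' • n with hQ
  set L := Real.sqrt (d^2/4 + H) with hLdef
  have hL2 : L^2 = d^2/4 + H := Real.sq_sqrt (by positivity)
  have hPx : dist P x = L := by
    rw [← Real.sqrt_sq (dist_nonneg (x := P) (y := x)), dist_eq_norm, hLdef]
    congr 1
    rw [show P - x = (2⁻¹:ℝ) • (y-x) + h' • n from by rw [hP, hM]; module, hnorm2, hh'2]
    ring
  have hQx : dist Q x = L := by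
    rw [← Real.sqrt_sq (dist_nonneg (x := Q) (y := x)), dist_eq_norm, hLdef]
    congr 1
    rw [show Q - x = (2⁻¹:ℝ) • (y-x) + (-h') • n from by rw [hQ, hM]; module, hnorm2]
    linear_combination hh'2
  have hPy : dist P y = L := by
    rw [← Real.sqrt_sq (dist_nonneg (x := P) (y := y)), dist_eq_norm, hLdef]
    congr 1
    rw [show P - y = (-2⁻¹ : ℝ) • (y-x) + h' • n from by rw [hP, hM]; module, hnorm2, hh'2]
    ring
  have hQy : dist Q y = L := by
    rw [← Real.sqrt_sq (dist_nonneg (x := Q) (y := y)), dist_eq_norm, hLdef]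
    congr 1
    rw [show Q - y = (-2⁻¹ : ℝ) • (y-x) + (-h') • n from by rw [hQ, hM]; module, hnorm2]
    linear_combination hh'2
  have hLlt : L < (b:ℝ)*δ := by
    have : L^2 < ((b:ℝ)*δ)^2 := by rw [hL2]; linarith
    exact lt_of_pow_lt_pow_left₀ 2 (by positivity) this
  have hPQ : dist P Q = 2*h' := by
    rw [dist_eq_norm, show P - Q = (2*h') • n from by rw [hP, hQ]; module, norm_smul, hn1,
      Real.norm_eq_abs, abs_of_pos (by linarith), mul_one]
  set ρ := min (((b:ℝ)*δ - L)/2) ((h' - (k:ℝ)*δ/2)/2) with hρdef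
  have hρ : 0 < ρ := by
    apply lt_min <;> linarith
  obtain ⟨z, hzball, hzX⟩ := Metric.dense_iff.mp hX P ρ hρ
  obtain ⟨z', hz'ball, hz'X⟩ := Metric.dense_iff.mp hX Q ρ hρ
  rw [mem_ball] at hzball hz'ball
  have hρ1 : ρ ≤ ((b:ℝ)*δ - L)/2 := min_le_left _ _
  have hρ2 : ρ ≤ (h' - (k:ℝ)*δ/2)/2 := min_le_right _ _
  have hzx : dist z x < (b:ℝ)*δ := by
    calc dist z x ≤ dist z P + dist P x := dist_triangle _ _ _
    _ < ρ + L := by linarith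
    _ ≤ (b:ℝ)*δ := by linarith
  have hzy : dist z y < (b:ℝ)*δ := by
    calc dist z y ≤ dist z P + dist P y := dist_triangle _ _ _
    _ < ρ + L := by linarith
    _ ≤ (b:ℝ)*δ := by linarith
  have hz'x : dist z' x < (b:ℝ)*δ := by
    calc dist z' x ≤ dist z' Q + dist Q x := dist_triangle _ _ _
    _ < ρ + L := by linarith
    _ ≤ (b:ℝ)*δ := by linarith
  have hz'y : dist z' y < (b:ℝ)*δ := by
    calc dist z' y ≤ dist z' Q + dist Q y := dist_triangle _ _ _
    _ < ρ + L := by linarith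
    _ ≤ (b:ℝ)*δ := by linarith
  have hfar : (k:ℝ)*δ < dist z z' := by
    have h6 : dist P Q ≤ dist P z + dist z z' + dist z' Q := dist_triangle4 _ _ _ _
    have h7 : dist P z < ρ := by rw [dist_comm]; exact hzball
    have h8 : dist z' Q < ρ := hz'ball
    rw [hPQ] at h6
    linarith
  have := hL z hzX z' hz'X hzx hzy hz'x hz'y
  linarith




lemma lensSmall_iff_tau_le {X : Set E2} {δ : ℝ} (hδ : 0 < δ) (hX : Dense X) {b k : ℕ}
    (hk : (k:ℝ) ≤ 2*b) {x y : E2} : LensSmall X δ b k x y ↔ tau δ b k ≤ dist x y := by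
  constructor
  · intro h
    by_contra hlt
    push_neg at hlt
    exact not_lensSmall_of_near hδ hX hlt h
  · exact lensSmall_of_far hδ hk

variable {V W : Set E2} {δ : ℝ}

lemma lt_mul_iff_floor (hδ : 0 < δ) (a : ℝ) (m : ℕ) : a < m*δ ↔ ⌊a/δ⌋ < (m:ℤ) := by
  rw [Int.floor_lt, div_lt_iff₀ hδ]
  push_cast
  rfl

lemma step_lt (hδ : 0 < δ) (f : ↥V → ↥W)
    (hstep : ∀ u v : ↥V, ⌊dist (u:E2) (v:E2)/δ⌋ = ⌊dist ((f u : E2)) ((f v : E2))/δ⌋)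
    (u v : ↥V) (m : ℕ) : dist (u:E2) (v:E2) < m*δ ↔ dist (f u:E2) (f v:E2) < m*δ := by
  rw [lt_mul_iff_floor hδ _ m, lt_mul_iff_floor hδ _ m, hstep u v]

lemma lensSmall_transfer (hδ : 0 < δ) (f : ↥V → ↥W) (hf : Function.Surjective f)
    (hstep : ∀ u v : ↥V, ⌊dist (u:E2) (v:E2)/δ⌋ = ⌊dist ((f u : E2)) ((f v : E2))/δ⌋)
    (b k : ℕ) (u v : ↥V) :
    LensSmall V δ b k (u:E2) (v:E2) ↔ LensSmall W δ b k (f u : E2) (f v : E2) := by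
  constructor
  · intro h z hz z' hz' h1 h2 h3 h4
    obtain ⟨a, ha⟩ := hf ⟨z, hz⟩
    obtain ⟨a', ha'⟩ := hf ⟨z', hz'⟩
    have haz : (f a : E2) = z := by rw [ha]
    have haz' : (f a' : E2) = z' := by rw [ha']
    rw [← haz] at h1 h2
    rw [← haz'] at h3 h4
    rw [← haz, ← haz']
    rw [← step_lt hδ f hstep a a' k]
    rw [← step_lt hδ f hstep a u b] at h1
    rw [← step_lt hδ f hstep a v b] at h2
    rw [← step_lt hδ f hstep a' u b] at h3
    rw [← step_lt hδ f hstep a' v b] at h4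
    exact h a a.2 a' a'.2 h1 h2 h3 h4
  · intro h z hz z' hz' h1 h2 h3 h4
    have hz1 : z = ((⟨z, hz⟩ : ↥V) : E2) := rfl
    have hz2 : z' = ((⟨z', hz'⟩ : ↥V) : E2) := rfl
    rw [hz1] at h1 h2 ⊢
    rw [hz2] at h3 h4 ⊢
    rw [step_lt hδ f hstep _ _ k]
    rw [step_lt hδ f hstep _ u b] at h1
    rw [step_lt hδ f hstep _ v b] at h2
    rw [step_lt hδ f hstep _ u b] at h3
    rw [step_lt hδ f hstep _ v b] at h4
    exact h _ (f ⟨z, hz⟩).2 _ (f ⟨z', hz'⟩).2 h1 h2 h3 h4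

lemma tau_le_iff (hδ : 0 < δ) (hV : Dense V) (hW : Dense W) (f : ↥V → ↥W)
    (hf : Function.Surjective f)
    (hstep : ∀ u v : ↥V, ⌊dist (u:E2) (v:E2)/δ⌋ = ⌊dist ((f u : E2)) ((f v : E2))/δ⌋)
    {b k : ℕ} (hk : (k:ℝ) ≤ 2*b) (u v : ↥V) :
    tau δ b k ≤ dist (u:E2) (v:E2) ↔ tau δ b k ≤ dist (f u : E2) (f v : E2) := by
  rw [← lensSmall_iff_tau_le hδ hV hk, ← lensSmall_iff_tau_le hδ hW hk,
    lensSmall_transfer hδ f hf hstep b k u v]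



lemma exists_gap {δ : ℝ} (hδ : 0 < δ) {t ε : ℝ} (ht : 0 < t) (hε : 0 < ε) :
    ∃ b k : ℕ, 1 ≤ k ∧ (k:ℝ) + 2 ≤ 2*(b:ℝ) ∧ δ < tau δ b (k+1) ∧
      |(tau δ b k - tau δ b (k+1)) - t| < ε := by
  set S := t^2 + δ^2 with hS
  have hSpos : 0 < S := by positivity
  have hsS : Real.sqrt S > 0 := Real.sqrt_pos.mpr hSpos
  have hsS2 : Real.sqrt S ^ 2 = S := Real.sq_sqrt hSpos.le
  set r := t / Real.sqrt S with hr
  have hr0 : 0 < r := div_pos ht hsS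
  have hr1 : r < 1 := by
    rw [hr, div_lt_one hsS]
    have h2 : t = Real.sqrt (t^2) := (Real.sqrt_sq ht.le).symm
    rw [h2]
    apply Real.sqrt_lt_sqrt (by positivity)
    nlinarith
  have hr2 : r^2 = t^2 / S := by rw [hr, div_pow, hsS2]
  -- limit value computation
  have hsqrt4 : Real.sqrt (4 - (2*r)^2) = 2*δ/Real.sqrt S := by
    have h3 : 4 - (2*r)^2 = (2*δ/Real.sqrt S)^2 := by
      rw [div_pow, hsS2, show ((2:ℝ)*r)^2 = 4*r^2 from by ring, hr2]
      field_simp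
      linear_combination 4*hS
    rw [h3, Real.sqrt_sq (by positivity)]
  have hLt : δ * (4*r) / (Real.sqrt (4 - (2*r)^2) + Real.sqrt (4 - (2*r)^2)) = t := by
    rw [hsqrt4, hr]
    field_simp
    ring
  -- the k-sequence
  set kk : ℕ → ℕ := fun n => ⌊2*(n:ℝ)*r⌋₊ with hkk
  have hup : ∀ n : ℕ, ((kk n : ℕ) : ℝ) ≤ 2*(n:ℝ)*r := by
    intro n
    exact Nat.floor_le (by positivity)
  have hlow : ∀ n : ℕ, 2*(n:ℝ)*r - 1 < ((kk n : ℕ) : ℝ) := by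
    intro n
    exact Nat.sub_one_lt_floor _
  have hka : Tendsto (fun n : ℕ => ((kk n : ℕ) : ℝ) / n) atTop (nhds (2*r)) := by
    have h1 : Tendsto (fun n : ℕ => 2*r - 1/(n:ℝ)) atTop (nhds (2*r)) := by
      simpa using tendsto_const_nhds.sub (tendsto_one_div_atTop_nhds_zero_nat (𝕜 := ℝ))
    apply tendsto_of_tendsto_of_tendsto_of_le_of_le' h1 tendsto_const_nhds
    · filter_upwards [eventually_ge_atTop 1] with n hn
      have hn' : (0:ℝ) < n := by exact_mod_cast hn
      rw [le_div_iff₀ hn']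
      have he : (2*r - 1/(n:ℝ))*n = 2*(n:ℝ)*r - 1 := by field_simp
      rw [he]
      exact (hlow n).le
    · filter_upwards [eventually_ge_atTop 1] with n hn
      have hn' : (0:ℝ) < n := by exact_mod_cast hn
      rw [div_le_iff₀ hn']
      calc ((kk n : ℕ) : ℝ) ≤ 2*(n:ℝ)*r := hup n
      _ = 2*r*n := by ring
  have hka1 : Tendsto (fun n : ℕ => (((kk n : ℕ) : ℝ) + 1) / n) atTop (nhds (2*r)) := by
    have h1 : Tendsto (fun n : ℕ => ((kk n : ℕ) : ℝ)/(n:ℝ) + 1/(n:ℝ)) atTop (nhds (2*r + 0)) :=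
      hka.add tendsto_one_div_atTop_nhds_zero_nat
    rw [add_zero] at h1
    apply h1.congr
    intro n
    rw [← add_div]
  have hnum : Tendsto (fun n : ℕ => (2 * ((kk n : ℕ) : ℝ) + 1) / n) atTop (nhds (4*r)) := by
    have h1 : Tendsto (fun n : ℕ => 2*(((kk n : ℕ) : ℝ)/(n:ℝ)) + 1/(n:ℝ)) atTop
        (nhds (2*(2*r) + 0)) := (hka.const_mul 2).add tendsto_one_div_atTop_nhds_zero_nat
    rw [add_zero, show (2:ℝ)*(2*r) = 4*r from by ring] at h1
    apply h1.congr
    intro n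
    rcases eq_or_ne ((n:ℝ)) 0 with h|h
    · simp [h]
    · field_simp
  have hden1 : Tendsto (fun n : ℕ => Real.sqrt (4 - (((kk n : ℕ) : ℝ)/n)^2)) atTop
      (nhds (Real.sqrt (4 - (2*r)^2))) :=
    (Real.continuous_sqrt.tendsto _).comp (tendsto_const_nhds.sub (hka.pow 2))
  have hden2 : Tendsto (fun n : ℕ => Real.sqrt (4 - ((((kk n : ℕ) : ℝ) + 1)/n)^2)) atTop
      (nhds (Real.sqrt (4 - (2*r)^2))) :=
    (Real.continuous_sqrt.tendsto _).comp (tendsto_const_nhds.sub (hka1.pow 2))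
  have hdenpos : 0 < Real.sqrt (4 - (2*r)^2) := by
    rw [hsqrt4]; positivity
  set G : ℕ → ℝ := fun n =>
    δ * ((2 * ((kk n : ℕ) : ℝ) + 1) / n) /
      (Real.sqrt (4 - (((kk n : ℕ) : ℝ)/n)^2) + Real.sqrt (4 - ((((kk n : ℕ) : ℝ) + 1)/n)^2))
    with hG
  have hGlim : Tendsto G atTop (nhds t) := by
    rw [← hLt]
    exact ((hnum.const_mul δ).div (hden1.add hden2) (by linarith))
  -- eventual equality with the tau-gap
  have hev : ∀ n : ℕ, 1 ≤ n → ((kk n : ℝ) + 2 ≤ 2*(n:ℝ)) →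
      tau δ n (kk n) - tau δ n (kk n + 1) = G n := by
    intro n hn1 hn2
    have hN : (0:ℝ) < n := by exact_mod_cast hn1
    have hKn : (0:ℝ) ≤ ((kk n : ℕ) : ℝ) := Nat.cast_nonneg _
    have hcast : ((kk n + 1 : ℕ) : ℝ) = ((kk n : ℕ) : ℝ) + 1 := by push_cast; ring
    have hA2 : (0:ℝ) < 4 - (((kk n : ℕ) : ℝ)/n)^2 := by
      have h4 : ((kk n : ℕ) : ℝ)/n < 2 := by rw [div_lt_iff₀ hN]; linarith
      have h0 : 0 ≤ ((kk n : ℕ) : ℝ)/n := by positivity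
      nlinarith
    have hB2 : (0:ℝ) ≤ 4 - ((((kk n : ℕ) : ℝ)+1)/n)^2 := by
      have h4 : (((kk n : ℕ) : ℝ)+1)/n ≤ 2 := by rw [div_le_iff₀ hN]; linarith
      have h0 : 0 ≤ (((kk n : ℕ) : ℝ)+1)/n := by positivity
      nlinarith
    have hApos : 0 < Real.sqrt (4 - (((kk n : ℕ) : ℝ)/n)^2) := Real.sqrt_pos.mpr hA2
    have hBnon : 0 ≤ Real.sqrt (4 - ((((kk n : ℕ) : ℝ)+1)/n)^2) := Real.sqrt_nonneg _
    have hAsq : Real.sqrt (4 - (((kk n : ℕ) : ℝ)/n)^2)^2 = 4 - (((kk n : ℕ) : ℝ)/n)^2 :=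
      Real.sq_sqrt hA2.le
    have hBsq : Real.sqrt (4 - ((((kk n : ℕ) : ℝ)+1)/n)^2)^2 = 4 - ((((kk n : ℕ) : ℝ)+1)/n)^2 :=
      Real.sq_sqrt hB2
    have htau1 : tau δ n (kk n) = (n:ℝ) * Real.sqrt (4 - (((kk n : ℕ) : ℝ)/n)^2) * δ := by
      rw [tau]
      congr 2
      rw [show 4*(n:ℝ)^2 - ((kk n : ℕ) : ℝ)^2 = (n:ℝ)^2 * (4 - (((kk n : ℕ) : ℝ)/n)^2) from by
        field_simp,
        Real.sqrt_mul (by positivity), Real.sqrt_sq hN.le]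
    have htau2 : tau δ n (kk n + 1) = (n:ℝ) * Real.sqrt (4 - ((((kk n : ℕ) : ℝ)+1)/n)^2) * δ := by
      rw [tau, hcast]
      congr 2
      rw [show 4*(n:ℝ)^2 - (((kk n : ℕ) : ℝ)+1)^2 = (n:ℝ)^2 * (4 - ((((kk n : ℕ) : ℝ)+1)/n)^2)
          from by field_simp,
        Real.sqrt_mul (by positivity), Real.sqrt_sq hN.le]

    rw [htau1, htau2]
    simp only [hG]
    set A := Real.sqrt (4 - (((kk n : ℕ) : ℝ)/n)^2) with hAdef
    set B := Real.sqrt (4 - ((((kk n : ℕ) : ℝ)+1)/n)^2) with hBdef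
    have hdiff : (A - B) * (A + B) * (n:ℝ)^2 = 2*((kk n : ℕ) : ℝ)+1 := by
      rw [show (A-B)*(A+B) = A^2 - B^2 from by ring, hAsq, hBsq]
      field_simp
      ring
    have hABpos : 0 < A + B := by linarith
    have hc : ((A+B)*(n:ℝ)) ≠ 0 := by positivity
    apply mul_right_cancel₀ hc
    have e2 : δ * ((2 * ((kk n : ℕ) : ℝ) + 1) / n) / (A + B) * ((A+B)*(n:ℝ))
        = δ*(2*((kk n : ℕ) : ℝ)+1) := by
      field_simp
    rw [e2]
    linear_combination δ * hdiff
  -- choose a suitable n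
  have hev1 : ∀ᶠ n : ℕ in atTop, 1 ≤ kk n := by
    obtain ⟨m, hm⟩ := exists_nat_ge (1/(2*r))
    filter_upwards [eventually_ge_atTop (m+1)] with n hn
    have hmn : (m:ℝ) ≤ (n:ℝ) := by exact_mod_cast le_trans (Nat.le_succ m) hn
    have h1 : (1:ℝ) ≤ 2*(n:ℝ)*r := by
      have h5 : 1/(2*r) ≤ (n:ℝ) := le_trans hm hmn
      rw [div_le_iff₀ (by positivity)] at h5
      linarith
    exact Nat.le_floor (by exact_mod_cast h1)
  have hev2 : ∀ᶠ n : ℕ in atTop, (kk n : ℝ) + 2 ≤ 2*(n:ℝ) := by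
    obtain ⟨m, hm⟩ := exists_nat_ge (3/(2*(1-r)))
    filter_upwards [eventually_ge_atTop (m+1)] with n hn
    have hmn : (m:ℝ) ≤ (n:ℝ) := by exact_mod_cast le_trans (Nat.le_succ m) hn
    have h3 : 3/(2*(1-r)) ≤ (n:ℝ) := le_trans hm hmn
    rw [div_le_iff₀ (by nlinarith)] at h3
    have h6 : (kk n : ℝ) ≤ 2*(n:ℝ)*r := hup n
    nlinarith
  have hev3 : ∀ᶠ n : ℕ in atTop, |G n - t| < ε := by
    obtain ⟨N, hN⟩ := Metric.tendsto_atTop.mp hGlim ε hε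
    filter_upwards [eventually_ge_atTop N] with n hn
    have := hN n hn
    rwa [Real.dist_eq] at this
  obtain ⟨n, hn1, hn2, hn3, hn4⟩ :=
    (hev1.and (hev2.and (hev3.and (eventually_ge_atTop 1)))).exists
  refine ⟨n, kk n, hn1, hn2, ?_, ?_⟩
  · -- δ < tau δ n (kk n + 1)
    have hK1 : (1:ℝ) ≤ (kk n : ℝ) := by exact_mod_cast hn1
    have hcast : ((kk n + 1 : ℕ) : ℝ) = ((kk n : ℕ) : ℝ) + 1 := by push_cast; ring
    have h1 : (1:ℝ) < Real.sqrt (4*(n:ℝ)^2 - ((kk n + 1 : ℕ) : ℝ)^2) := by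
      apply (Real.lt_sqrt (by norm_num)).mpr
      rw [hcast]
      have f1 : (1:ℝ) ≤ 2*(n:ℝ) - ((kk n : ℝ)+1) := by linarith
      have f2 : (4:ℝ) ≤ 2*(n:ℝ) + ((kk n : ℝ)+1) := by linarith
      nlinarith [mul_le_mul f1 f2 (by norm_num) (by linarith)]
    rw [tau]
    exact (lt_mul_iff_one_lt_left hδ).mpr h1
  · rw [hev n hn4 hn2]
    exact hn3




lemma ray_dist_left {x y : E2} {e : ℝ} (c : ℝ) (he : dist x y = e) (hepos : 0 < e)
    (hc : 0 ≤ c) : dist (x + (c/e) • (x - y)) x = c := by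
  have hxy : ‖x - y‖ = e := by rw [← he, dist_eq_norm]
  rw [dist_eq_norm, show x + (c/e) • (x-y) - x = (c/e) • (x-y) from by abel, norm_smul, hxy,
    Real.norm_eq_abs, abs_of_nonneg (by positivity), div_mul_cancel₀ _ hepos.ne']

lemma ray_dist_right {x y : E2} {e : ℝ} (c : ℝ) (he : dist x y = e) (hepos : 0 < e)
    (hc : 0 ≤ c) : dist (x + (c/e) • (x - y)) y = e + c := by
  have hxy : ‖x - y‖ = e := by rw [← he, dist_eq_norm]
  have h1 : x + (c/e) • (x-y) - y = ((c+e)/e) • (x-y) := by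
    have h2 : (c+e)/e = c/e + 1 := by field_simp
    rw [h2, add_smul, one_smul]
    abel
  rw [dist_eq_norm, h1, norm_smul, hxy, Real.norm_eq_abs,
    abs_of_nonneg (by positivity), div_mul_cancel₀ _ hepos.ne']
  ring

theorem step_isometry_euclidean_plane_is_isometry
    (V W : Set (EuclideanSpace ℝ (Fin 2))) (hV : Dense V) (hW : Dense W)
    (δ : ℝ) (hδ : 0 < δ) (f : V → W) (hf : Function.Surjective f)
    (hstep : ∀ u v : V, ⌊dist (u : EuclideanSpace ℝ (Fin 2)) (v : EuclideanSpace ℝ (Fin 2)) / δ⌋ =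
      ⌊dist ((f u : EuclideanSpace ℝ (Fin 2))) ((f v : EuclideanSpace ℝ (Fin 2))) / δ⌋) :
    ∀ u v : V, dist ((f u : EuclideanSpace ℝ (Fin 2))) ((f v : EuclideanSpace ℝ (Fin 2))) =
      dist (u : EuclideanSpace ℝ (Fin 2)) (v : EuclideanSpace ℝ (Fin 2)) := by
  have dir1 : ∀ u v : V, dist (u:E2) (v:E2) ≤ dist (f u : E2) (f v : E2) := by
    intro u v
    rcases eq_or_lt_of_le (dist_nonneg : 0 ≤ dist (u:E2) (v:E2)) with h0|h0
    · rw [← h0]; exact dist_nonneg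
    by_contra hlt
    push_neg at hlt
    set e := dist (u:E2) (v:E2) with he
    set e' := dist (f u : E2) (f v : E2) with he'
    set ε := min ((e - e')/2) δ with hεdef
    have hεe : ε ≤ (e - e')/2 := min_le_left _ _
    have hεδ : ε ≤ δ := min_le_right _ _
    have hεpos : 0 < ε := lt_min (by linarith) hδ
    have hεe2 : ε < e := by
      have : (e - e')/2 < e := by
        have := dist_nonneg (x := (f u : E2)) (y := (f v : E2))
        rw [← he'] at this
        linarith
      linarith
    obtain ⟨b, k, hk1, hk2, hτδ, hgap⟩ :=
      exists_gap hδ (t := e - ε/2) (by linarith) (half_pos hεpos)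
    set τ₂ := tau δ b k with hτ₂
    set τ₁ := tau δ b (k+1) with hτ₁
    obtain ⟨hga, hgb⟩ := abs_lt.mp hgap
    -- τ₂ - τ₁ ∈ (e - ε, e)
    have hga' : e - ε < τ₂ - τ₁ := by linarith
    have hgb' : τ₂ - τ₁ < e := by linarith
    set σ := (e - (τ₂ - τ₁))/2 with hσdef
    have hσpos : 0 < σ := by rw [hσdef]; linarith
    have hσε : σ < ε/2 := by rw [hσdef]; linarith
    have hτ₁σ : 0 < τ₁ - σ := by
      have : σ < δ := by linarith
      linarith
    set P := (u:E2) + ((τ₁ - σ)/e) • ((u:E2) - (v:E2)) with hP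
    have hPu : dist P (u:E2) = τ₁ - σ := ray_dist_left _ he.symm h0 hτ₁σ.le
    have hPv : dist P (v:E2) = e + (τ₁ - σ) := ray_dist_right _ he.symm h0 hτ₁σ.le
    obtain ⟨z, hzball, hzV⟩ := Metric.dense_iff.mp hV P (σ/2) (by positivity)
    rw [mem_ball] at hzball
    set zz : ↥V := ⟨z, hzV⟩ with hzz
    have hzcoe : (zz : E2) = z := rfl
    have hz1 : dist (zz : E2) (u:E2) < τ₁ := by
      rw [hzcoe]
      calc dist z (u:E2) ≤ dist z P + dist P (u:E2) := dist_triangle _ _ _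
      _ < σ/2 + (τ₁ - σ) := by rw [hPu]; linarith
      _ < τ₁ := by linarith
    have hz2 : τ₂ ≤ dist (zz : E2) (v:E2) := by
      rw [hzcoe]
      have h3 : dist P (v:E2) ≤ dist P z + dist z (v:E2) := dist_triangle _ _ _
      have h4 : dist P z < σ/2 := by rwa [dist_comm]
      rw [hPv] at h3
      have : τ₂ = (τ₂ - τ₁) + τ₁ := by ring
      rw [this]
      have h5 : (τ₂ - τ₁) + τ₁ ≤ e + (τ₁ - σ) - σ/2 := by linarith
      linarith
    have hk2' : ((k:ℕ):ℝ) ≤ 2*(b:ℝ) := by linarith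
    have hk2'' : (((k+1:ℕ)):ℝ) ≤ 2*(b:ℝ) := by push_cast; linarith
    have ht2 : τ₂ ≤ dist (f zz : E2) (f v : E2) :=
      (tau_le_iff hδ hV hW f hf hstep hk2' zz v).mp hz2
    have ht1 : dist (f zz : E2) (f u : E2) < τ₁ := by
      by_contra h6
      push_neg at h6
      have := (tau_le_iff hδ hV hW f hf hstep hk2'' zz u).mpr h6
      rw [← hτ₁] at this
      linarith
    have h7 : dist (f zz : E2) (f v : E2) ≤ dist (f zz : E2) (f u : E2) + e' :=
      dist_triangle _ _ _
    have h8 : e - ε < e' := by linarith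
    linarith
  have dir2 : ∀ u v : V, dist (f u : E2) (f v : E2) ≤ dist (u:E2) (v:E2) := by
    intro u v
    by_contra hlt
    push_neg at hlt
    set e := dist (u:E2) (v:E2) with he
    set e' := dist (f u : E2) (f v : E2) with he'
    have h0 : 0 < e' := lt_of_le_of_lt dist_nonneg hlt
    set ε := min ((e' - e)/2) δ with hεdef
    have hεe : ε ≤ (e' - e)/2 := min_le_left _ _
    have hεδ : ε ≤ δ := min_le_right _ _
    have hεpos : 0 < ε := lt_min (by linarith) hδ
    have hεe2 : ε < e' := by
      have : 0 ≤ e := dist_nonneg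
      linarith [min_le_left ((e' - e)/2) δ]
    obtain ⟨b, k, hk1, hk2, hτδ, hgap⟩ :=
      exists_gap hδ (t := e' - ε/2) (by linarith) (half_pos hεpos)
    set τ₂ := tau δ b k with hτ₂
    set τ₁ := tau δ b (k+1) with hτ₁
    obtain ⟨hga, hgb⟩ := abs_lt.mp hgap
    have hga' : e' - ε < τ₂ - τ₁ := by linarith
    have hgb' : τ₂ - τ₁ < e' := by linarith
    set σ := (e' - (τ₂ - τ₁))/2 with hσdef
    have hσpos : 0 < σ := by rw [hσdef]; linarith
    have hσε : σ < ε/2 := by rw [hσdef]; linarith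
    have hτ₁σ : 0 < τ₁ - σ := by
      have : σ < δ := by linarith
      linarith
    set P := ((f u : E2)) + ((τ₁ - σ)/e') • (((f u : E2)) - ((f v : E2))) with hP
    have hPu : dist P ((f u : E2)) = τ₁ - σ := ray_dist_left _ he'.symm h0 hτ₁σ.le
    have hPv : dist P ((f v : E2)) = e' + (τ₁ - σ) := ray_dist_right _ he'.symm h0 hτ₁σ.le
    obtain ⟨w, hwball, hwW⟩ := Metric.dense_iff.mp hW P (σ/2) (by positivity)
    rw [mem_ball] at hwball
    obtain ⟨s, hs⟩ := hf ⟨w, hwW⟩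
    have hscoe : (f s : E2) = w := by rw [hs]
    have hw1 : dist (f s : E2) (f u : E2) < τ₁ := by
      rw [hscoe]
      calc dist w (f u : E2) ≤ dist w P + dist P (f u : E2) := dist_triangle _ _ _
      _ < σ/2 + (τ₁ - σ) := by rw [hPu]; linarith
      _ < τ₁ := by linarith
    have hw2 : τ₂ ≤ dist (f s : E2) (f v : E2) := by
      rw [hscoe]
      have h3 : dist P ((f v : E2)) ≤ dist P w + dist w ((f v : E2)) := dist_triangle _ _ _
      have h4 : dist P w < σ/2 := by rwa [dist_comm]
      rw [hPv] at h3
      have h5 : τ₂ = (τ₂ - τ₁) + τ₁ := by ring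
      rw [h5]
      linarith
    have hk2' : ((k:ℕ):ℝ) ≤ 2*(b:ℝ) := by linarith
    have hk2'' : (((k+1:ℕ)):ℝ) ≤ 2*(b:ℝ) := by push_cast; linarith
    have ht2 : τ₂ ≤ dist (s : E2) (v : E2) :=
      (tau_le_iff hδ hV hW f hf hstep hk2' s v).mpr hw2
    have ht1 : dist (s : E2) (u : E2) < τ₁ := by
      by_contra h6
      push_neg at h6
      have := (tau_le_iff hδ hV hW f hf hstep hk2'' s u).mp h6
      rw [← hτ₁] at this
      linarith
    have h7 : dist (s : E2) (v : E2) ≤ dist (s : E2) (u : E2) + e := dist_triangle _ _ _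
    linarith
  intro u v
  exact le_antisymm (dir2 u v) (dir1 u v)

end
end StepIsometryAux
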